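/- Every maximal nondegenerate simplex with vertices among the vertices of Δ^a × Δ^b has class exactly 1; consequently every simplicial cover of Δ^a × Δ^b using vertices of the polytope has at least C(a+b, a) simplices, and every vertex triangulation has exactly C(a+b, a) simplices. -/

import Mathlib

/-- A vertex of `Δ^a × Δ^b` in reduced coordinates: a 0/1 vector in `ℝ^{a+b}` with at most
one 1 among the first `a` coordinates and at most one 1 among the last `b` coordinates. -/
def IsRedVertex (a b : ℕ) (x : Fin a ⊕ Fin b → ℝ) : Prop :=
  (∀ z, x z = 0 ∨ x z = 1) ∧
    (∑ i : Fin a, x (Sum.inl i)) ≤ 1 ∧ (∑ j : Fin b, x (Sum.inr j)) ≤ 1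

/-- The product of two simplices `Δ^a × Δ^b` in reduced coordinates. -/
def redProd (a b : ℕ) : Set (Fin a ⊕ Fin b → ℝ) :=
  {x | (∀ z, 0 ≤ x z) ∧ (∑ i : Fin a, x (Sum.inl i)) ≤ 1 ∧ (∑ j : Fin b, x (Sum.inr j)) ≤ 1}

/-- The matrix `[1|M]` whose rows are the `a+b+1` vertices of a maximal simplex prefixed
by a 1; the class of the simplex is the absolute value of its determinant. -/
def classMat (a b : ℕ) (w : Option (Fin a ⊕ Fin b) → (Fin a ⊕ Fin b → ℝ)) :
    Matrix (Option (Fin a ⊕ Fin b)) (Option (Fin a ⊕ Fin b)) ℝ :=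
  Matrix.of fun r c => Option.elim c 1 (fun j => w r j)

namespace Stmt15Aux
open MeasureTheory Set Matrix
open scoped ENNReal NNReal
noncomputable section



def corner (ι : Type*) [Fintype ι] : Set (ι → ℝ) :=
  {x | (∀ i, 0 ≤ x i) ∧ ∑ i, x i ≤ 1}

lemma isClosed_corner (ι : Type*) [Fintype ι] : IsClosed (corner ι) := by
  have : corner ι = (⋂ i, {x : ι → ℝ | 0 ≤ x i}) ∩ {x : ι → ℝ | ∑ i, x i ≤ 1} := by
    ext x; simp [corner]
  rw [this]
  exact (isClosed_iInter fun i => isClosed_le continuous_const (continuous_apply i)).inter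
    (isClosed_le (by continuity) continuous_const)

lemma convex_corner (ι : Type*) [Fintype ι] : Convex ℝ (corner ι) := by
  intro x hx y hy α β hα hβ hαβ
  refine ⟨fun i => add_nonneg (mul_nonneg hα (hx.1 i)) (mul_nonneg hβ (hy.1 i)), ?_⟩
  calc ∑ i, (α * x i + β * y i) = α * ∑ i, x i + β * ∑ i, y i := by
        rw [Finset.sum_add_distrib, Finset.mul_sum, Finset.mul_sum]
    _ ≤ α * 1 + β * 1 := by
        gcongr
        exacts [hx.2, hy.2]
    _ = 1 := by linarith

def cube (n : ℕ) : Set (Fin n → ℝ) := Set.pi Set.univ fun _ => Icc (0:ℝ) 1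

def oset (n : ℕ) : Set (Fin n → ℝ) := cube n ∩ {y | Monotone y}

lemma isClosed_oset (n : ℕ) : IsClosed (oset n) := by
  refine IsClosed.inter (isClosed_set_pi fun i _ => isClosed_Icc) ?_
  have : {y : Fin n → ℝ | Monotone y}
      = ⋂ (p : Fin n × Fin n) (_ : p.1 ≤ p.2), {y | y p.1 ≤ y p.2} := by
    ext y
    simp only [mem_iInter, mem_setOf_eq]
    exact ⟨fun h p hp => h hp, fun h a b hab => h (a, b) hab⟩
  rw [this]
  exact isClosed_iInter fun p => isClosed_iInter fun _ =>
    isClosed_le (continuous_apply _) (continuous_apply _)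

lemma volume_cube (n : ℕ) : volume (cube n) = 1 := by
  rw [cube, volume_pi_pi]
  simp [Real.volume_Icc]



open MeasureTheory Set


lemma volume_perm_preimage {n : ℕ} (σ : Equiv.Perm (Fin n)) :
    volume {y : Fin n → ℝ | y ∘ σ ∈ oset n} = volume (oset n) := by
  have hmp := volume_measurePreserving_piCongrLeft (fun _ : Fin n => ℝ) σ.symm
  have hco : ⇑(MeasurableEquiv.piCongrLeft (fun _ : Fin n => ℝ) σ.symm)
      = fun y : Fin n → ℝ => y ∘ σ := by
    funext y
    funext j
    have h := MeasurableEquiv.piCongrLeft_apply_apply (β := fun _ : Fin n => ℝ) σ.symm y (σ j)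
    rwa [σ.symm_apply_apply] at h
  have : {y : Fin n → ℝ | y ∘ σ ∈ oset n}
      = (MeasurableEquiv.piCongrLeft (fun _ : Fin n => ℝ) σ.symm) ⁻¹' oset n := by
    rw [hco]; rfl
  rw [this]
  exact hmp.measure_preimage (isClosed_oset n).measurableSet.nullMeasurableSet

lemma pair_null {n : ℕ} (i j : Fin n) (hij : i ≠ j) :
    volume {y : Fin n → ℝ | y i = y j} = 0 := by
  set f : (Fin n → ℝ) →ₗ[ℝ] ℝ := (LinearMap.proj i : (Fin n → ℝ) →ₗ[ℝ] ℝ) - (LinearMap.proj j : (Fin n → ℝ) →ₗ[ℝ] ℝ) with hf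
  have hker : {y : Fin n → ℝ | y i = y j} = (LinearMap.ker f : Set (Fin n → ℝ)) := by
    ext y
    simp [hf, sub_eq_zero, eq_comm]
  rw [hker]
  refine Measure.addHaar_submodule volume _ ?_
  intro htop
  have h1 : f (Pi.single i 1) = 0 := by
    rw [← LinearMap.mem_ker, htop]; trivial
  simp [hf, Pi.single_apply, hij.symm] at h1

lemma volume_oset (n : ℕ) : volume (oset n) = (n.factorial : ℝ≥0∞)⁻¹ := by
  classical
  set S : Equiv.Perm (Fin n) → Set (Fin n → ℝ) := fun σ => {y | y ∘ σ ∈ oset n} with hS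
  have hunion : (⋃ σ, S σ) = cube n := by
    apply Subset.antisymm
    · refine iUnion_subset fun σ y hy => ?_
      intro j _
      have := hy.1 (σ.symm j) (mem_univ _)
      simpa using this
    · intro y hy
      refine mem_iUnion.2 ⟨Tuple.sort y, ?_, Tuple.monotone_sort y⟩
      intro j _
      exact hy ((Tuple.sort y) j) (mem_univ _)
  have hnm : ∀ σ, NullMeasurableSet (S σ) volume := by
    intro σ
    have : S σ = (fun y : Fin n → ℝ => y ∘ σ) ⁻¹' oset n := rfl
    rw [this]
    exact (((isClosed_oset n).measurableSet).preimage (by measurability)).nullMeasurableSet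
  have hdisj : Pairwise fun σ τ => AEDisjoint volume (S σ) (S τ) := by
    intro σ τ hst
    have hsub : S σ ∩ S τ ⊆ ⋃ (p : Fin n × Fin n) (_ : p.1 ≠ p.2), {y | y p.1 = y p.2} := by
      rintro y ⟨h1, h2⟩
      by_cases hinj : Function.Injective y
      · exfalso
        apply hst
        apply Equiv.ext
        intro k
        apply hinj
        exact congrFun (Tuple.unique_monotone h1.2 h2.2) k
      · rw [Function.not_injective_iff] at hinj
        obtain ⟨i, j, hval, hne⟩ := hinj
        exact mem_iUnion.2 ⟨(i, j), mem_iUnion.2 ⟨hne, hval⟩⟩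
    refine measure_mono_null hsub ?_
    refine measure_iUnion_null fun p => measure_iUnion_null fun hp => pair_null p.1 p.2 hp
  have hsum := measure_iUnion₀ hdisj hnm
  rw [hunion, volume_cube, tsum_fintype] at hsum
  have hvol : ∀ σ : Equiv.Perm (Fin n), volume (S σ) = volume (oset n) :=
    fun σ => volume_perm_preimage σ
  rw [Finset.sum_congr rfl (fun σ _ => hvol σ), Finset.sum_const, Finset.card_univ,
    Fintype.card_perm, nsmul_eq_mul, Fintype.card_fin] at hsum
  have h0 : (n.factorial : ℝ≥0∞) ≠ 0 := by
    exact_mod_cast Nat.factorial_ne_zero n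
  have ht : (n.factorial : ℝ≥0∞) ≠ ⊤ := ENNReal.natCast_ne_top _
  calc volume (oset n) = (n.factorial : ℝ≥0∞)⁻¹ * ((n.factorial : ℝ≥0∞) * volume (oset n)) := by
        rw [← mul_assoc, ENNReal.inv_mul_cancel h0 ht, one_mul]
    _ = (n.factorial : ℝ≥0∞)⁻¹ := by rw [← hsum, mul_one]





-- partial sum matrix
def Pm (n : ℕ) : Matrix (Fin n) (Fin n) ℝ :=
  Matrix.of fun i j => if (j : ℕ) ≤ (i : ℕ) then 1 else 0

-- difference matrix
def Qm (n : ℕ) : Matrix (Fin n) (Fin n) ℝ :=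
  Matrix.of fun i j => if j = i then 1 else if (j : ℕ) + 1 = (i : ℕ) then -1 else 0

lemma det_Pm (n : ℕ) : (Pm n).det = 1 := by
  rw [Matrix.det_of_lowerTriangular]
  · simp [Pm]
  · intro i j hij
    have h2 : i < j := hij
    rw [Fin.lt_def] at h2
    simp only [Pm, Matrix.of_apply, ite_eq_right_iff]
    intro h
    omega
  -- BlockTriangular toDual : toDual j < toDual i → M i j = 0, i.e. i < j → M i j = 0

lemma det_Qm (n : ℕ) : (Qm n).det = 1 := by
  rw [Matrix.det_of_lowerTriangular]
  · simp [Qm]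
  · intro i j hij
    have h0 : i < j := hij
    rw [Fin.lt_def] at h0
    have h1 : ¬ (j = i) := by intro h; subst h; omega
    have h2 : ¬ ((j : ℕ) + 1 = (i : ℕ)) := by omega
    simp [Qm, h1, h2]

lemma Pm_apply {n : ℕ} (x : Fin n → ℝ) (i : Fin n) :
    ((Pm n) *ᵥ x) i = ∑ j ∈ Finset.univ.filter (fun j : Fin n => (j : ℕ) ≤ (i : ℕ)), x j := by
  rw [Matrix.mulVec, dotProduct]
  rw [Finset.sum_filter]
  congr 1
  funext j
  simp [Pm, ite_mul]

lemma P_image (n : ℕ) : (Matrix.toLin' (Pm n)) '' corner (Fin n) ⊆ oset n := by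
  rintro _ ⟨x, hx, rfl⟩
  rw [Matrix.toLin'_apply]
  constructor
  · intro i _
    rw [Pm_apply]
    constructor
    · exact Finset.sum_nonneg fun j _ => hx.1 j
    · refine le_trans ?_ hx.2
      exact Finset.sum_le_sum_of_subset_of_nonneg (Finset.filter_subset _ _)
        fun j _ _ => hx.1 j
  · intro i i' hii'
    rw [Pm_apply, Pm_apply]
    apply Finset.sum_le_sum_of_subset_of_nonneg
    · intro j hj
      simp only [Finset.mem_filter, Finset.mem_univ, true_and] at hj ⊢
      exact le_trans hj hii'
    · exact fun j _ _ => hx.1 j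

lemma Qm_apply {n : ℕ} (y : Fin n → ℝ) (i : Fin n) :
    ((Qm n) *ᵥ y) i = y i + ∑ j : Fin n, (if (j : ℕ) + 1 = (i : ℕ) then -(y j) else 0) := by
  rw [Matrix.mulVec, dotProduct]
  have : ∀ j : Fin n, Qm n i j * y j
      = (if j = i then y j else 0) + (if (j : ℕ) + 1 = (i : ℕ) then -(y j) else 0) := by
    intro j
    by_cases h1 : j = i
    · subst h1
      simp [Qm]
    · by_cases h2 : (j : ℕ) + 1 = (i : ℕ) <;> simp [Qm, h1, h2]
  rw [Finset.sum_congr rfl fun j _ => this j, Finset.sum_add_distrib]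
  congr 1
  simp

lemma Q_image (n : ℕ) : (Matrix.toLin' (Qm n)) '' oset n ⊆ corner (Fin n) := by
  rintro _ ⟨y, hy, rfl⟩
  rw [Matrix.toLin'_apply]
  have hy0 : ∀ i : Fin n, 0 ≤ y i := fun i => (hy.1 i (mem_univ i)).1
  have hy1 : ∀ i : Fin n, y i ≤ 1 := fun i => (hy.1 i (mem_univ i)).2
  constructor
  · intro i
    rw [Qm_apply]
    by_cases h : ∃ j : Fin n, (j : ℕ) + 1 = (i : ℕ)
    · obtain ⟨j₀, hj₀⟩ := h
      rw [Finset.sum_eq_single j₀ (fun j _ hj => by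
        rw [if_neg]
        intro hc
        exact hj (Fin.ext (by omega))) (fun h => absurd (Finset.mem_univ j₀) h)]
      rw [if_pos hj₀]
      have : y j₀ ≤ y i := hy.2 (by rw [Fin.le_def]; omega)
      linarith
    · push_neg at h
      rw [Finset.sum_eq_zero fun j _ => if_neg (h j)]
      rw [add_zero]
      exact hy0 i
  · -- sum over i
    rw [Finset.sum_congr rfl fun i _ => Qm_apply y i]
    rw [Finset.sum_add_distrib]
    rw [Finset.sum_comm]
    have hcol : ∀ j : Fin n,
        (∑ i : Fin n, if (j : ℕ) + 1 = (i : ℕ) then -(y j) else 0)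
        = if (j : ℕ) + 1 < n then -(y j) else 0 := by
      intro j
      by_cases h : (j : ℕ) + 1 < n
      · rw [Finset.sum_eq_single (⟨(j : ℕ) + 1, h⟩ : Fin n)
          (fun i _ hi => if_neg (fun hc => hi (Fin.ext hc.symm)))
          (fun h' => absurd (Finset.mem_univ _) h')]
        simp [h]
      · rw [Finset.sum_eq_zero, if_neg h]
        intro i _
        rw [if_neg]
        intro hc
        have := i.2
        omega
    rw [Finset.sum_congr rfl fun j _ => hcol j]
    rcases Nat.eq_zero_or_pos n with hn | hn
    · subst hn
      simp
    · -- split last index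
      have key : ∑ j : Fin n, (y j + if (j : ℕ) + 1 < n then -(y j) else 0)
          = y ⟨n - 1, by omega⟩ := by
        rw [Finset.sum_eq_single (⟨n - 1, by omega⟩ : Fin n)]
        · rw [if_neg (by simp only [Fin.val_mk]; omega)]
          ring
        · intro j _ hj
          have hj' : (j : ℕ) + 1 < n := by
            have h2 := j.2
            rcases Nat.lt_or_ge ((j : ℕ) + 1) n with h | h
            · exact h
            · exfalso
              apply hj
              apply Fin.ext
              simp only [Fin.val_mk]
              omega
          rw [if_pos hj']
          ring
        · intro h
          exact absurd (Finset.mem_univ _) h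
      rw [Finset.sum_add_distrib] at key
      rw [key]
      exact hy1 _

lemma volume_corner_fin (n : ℕ) : volume (corner (Fin n)) = (n.factorial : ℝ≥0∞)⁻¹ := by
  rw [← volume_oset]
  apply le_antisymm
  · have h1 : volume ((Matrix.toLin' (Pm n)) '' corner (Fin n)) ≤ volume (oset n) :=
      measure_mono (P_image n)
    rwa [Measure.addHaar_image_linearMap, LinearMap.det_toLin', det_Pm,
      abs_one, ENNReal.ofReal_one, one_mul] at h1
  · have h1 : volume ((Matrix.toLin' (Qm n)) '' oset n) ≤ volume (corner (Fin n)) :=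
      measure_mono (Q_image n)
    rwa [Measure.addHaar_image_linearMap, LinearMap.det_toLin', det_Qm,
      abs_one, ENNReal.ofReal_one, one_mul] at h1





def vtx (ι : Type*) [Fintype ι] [DecidableEq ι] : Option ι → (ι → ℝ) :=
  fun o => o.elim 0 fun i => Pi.single i 1

lemma corner_eq_convexHull (ι : Type*) [Fintype ι] [DecidableEq ι] :
    corner ι = convexHull ℝ (Set.range (vtx ι)) := by
  apply Subset.antisymm
  · intro x hx
    have hw : ∀ o : Option ι, (0:ℝ) ≤ Option.elim o (1 - ∑ i, x i) (fun i => x i) := by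
      intro o
      cases o with
      | none => simpa using hx.2
      | some i => exact hx.1 i
    have hsum : ∑ o : Option ι, Option.elim o (1 - ∑ i, x i) (fun i => x i) = 1 := by
      rw [Fintype.sum_option]
      simp
    have hmem := Finset.centerMass_mem_convexHull (t := (Finset.univ : Finset (Option ι)))
      (w := fun o => Option.elim o (1 - ∑ i, x i) (fun i => x i)) (z := vtx ι)
      (fun o _ => hw o) (by rw [hsum]; norm_num)
      (fun o _ => mem_range_self o)
    have hcm : Finset.univ.centerMass
        (fun o : Option ι => Option.elim o (1 - ∑ i, x i) (fun i => x i)) (vtx ι) = x := by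
      rw [Finset.centerMass_eq_of_sum_1 _ _ hsum]
      rw [Fintype.sum_option]
      simp only [vtx, Option.elim]
      rw [smul_zero, zero_add]
      funext j
      simp only [Finset.sum_apply, Pi.smul_apply, smul_eq_mul]
      rw [Finset.sum_eq_single j (fun i _ hij => by rw [Pi.single_apply, if_neg hij.symm, mul_zero])
        (fun h => absurd (Finset.mem_univ _) h)]
      simp
    rwa [hcm] at hmem
  · apply convexHull_min
    · rintro _ ⟨o, rfl⟩
      cases o with
      | none =>
        exact ⟨fun i => by simp [vtx], by simp [vtx]⟩
      | some i =>
        constructor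
        · intro j
          by_cases h : j = i
          · subst h; simp [vtx]
          · simp [vtx, Pi.single_apply, h]
        · simp [vtx]
    · exact convex_corner ι

/-- the reduced matrix of differences -/
lemma detOptionBlock {ι : Type*} [Fintype ι] [DecidableEq ι]
    (M : Matrix (Option ι) (Option ι) ℝ) (h1 : ∀ r, M r none = 1) :
    M.det = (Matrix.of fun i j : ι => M (some i) (some j) - M none (some j)).det := by
  classical
  set e : Unit ⊕ ι ≃ Option ι :=
    (Equiv.sumComm Unit ι).trans (Equiv.optionEquivSumPUnit ι).symm with he
  have hsub : M.submatrix e e = Matrix.fromBlocks 1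
      (Matrix.of fun (_ : Unit) j => M none (some j))
      (Matrix.of fun i (_ : Unit) => 1)
      (Matrix.of fun i j : ι => M (some i) (some j)) := by
    ext r c
    rcases r with u | i <;> rcases c with v | j <;>
      simp [he, Matrix.fromBlocks, Matrix.submatrix, Equiv.optionEquivSumPUnit, h1]
  have hdet := Matrix.det_submatrix_equiv_self e M
  rw [hsub] at hdet
  rw [← hdet, Matrix.det_fromBlocks_one₁₁]
  congr 1
  ext i j
  simp [Matrix.mul_apply]




lemma tu_fin : ∀ (n : ℕ) (A : Matrix (Fin n) (Fin n) ℝ) (p : Fin n → Bool),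
    (∀ r c, A r c = 0 ∨ A r c = 1) →
    (∀ r c c', p c = p c' → A r c ≠ 0 → A r c' ≠ 0 → c = c') →
    A.det = 0 ∨ A.det = 1 ∨ A.det = -1 := by
  intro n
  induction n with
  | zero =>
    intro A p _ _
    right; left
    exact Matrix.det_fin_zero
  | succ n ih =>
    intro A p h01 huniq
    by_cases hrow : ∃ r, ∀ c c', A r c ≠ 0 → A r c' ≠ 0 → c = c'
    · obtain ⟨r, hr⟩ := hrow
      by_cases hz : ∀ c, A r c = 0
      · exact Or.inl (Matrix.det_eq_zero_of_row_eq_zero r hz)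
      · push_neg at hz
        obtain ⟨c₀, hc₀⟩ := hz
        have hother : ∀ c, c ≠ c₀ → A r c = 0 := by
          intro c hc
          by_contra h
          exact hc (hr c c₀ h hc₀)
        have hexp := Matrix.det_succ_row A r
        rw [Finset.sum_eq_single c₀ (fun c _ hc => by rw [hother c hc]; ring)
          (fun h => absurd (Finset.mem_univ _) h)] at hexp
        have hA1 : A r c₀ = 1 := (h01 r c₀).resolve_left hc₀
        rw [hA1, mul_one] at hexp
        have hminor := ih (A.submatrix r.succAbove c₀.succAbove) (p ∘ c₀.succAbove)
          (fun r' c' => h01 _ _)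
          (fun r' c c' hp h1 h2 => Fin.succAbove_right_injective
            (huniq (r.succAbove r') _ _ hp h1 h2))
        have hsign : (-1 : ℝ) ^ ((r : ℕ) + (c₀ : ℕ)) = 1
            ∨ (-1 : ℝ) ^ ((r : ℕ) + (c₀ : ℕ)) = -1 := by
          rcases Nat.even_or_odd ((r : ℕ) + (c₀ : ℕ)) with h | h
          · exact Or.inl (h.neg_one_pow)
          · exact Or.inr (h.neg_one_pow)
        rw [hexp]
        rcases hsign with h | h <;> rcases hminor with h' | h' | h' <;> rw [h, h'] <;> norm_num
    · push_neg at hrow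
      left
      rw [← Matrix.exists_mulVec_eq_zero_iff]
      refine ⟨fun c => if p c then 1 else -1, ?_, ?_⟩
      · intro h
        have := congrFun h 0
        by_cases hp : p 0 <;> simp [hp] at this
      · -- each row has exactly one nonzero in each part
        funext r
        obtain ⟨c1, c2, hc1, hc2, hne⟩ := hrow r
        have hpp : p c1 ≠ p c2 := by
          intro h
          exact hne (huniq r c1 c2 h hc1 hc2)
        -- wlog p c1 = true
        obtain ⟨cT, cF, hcT, hcF, hpT, hpF⟩ :
            ∃ cT cF, A r cT ≠ 0 ∧ A r cF ≠ 0 ∧ p cT = true ∧ p cF = false := by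
          cases h1 : p c1 <;> cases h2 : p c2
          · rw [h1, h2] at hpp; exact absurd rfl hpp
          · exact ⟨c2, c1, hc2, hc1, h2, h1⟩
          · exact ⟨c1, c2, hc1, hc2, h1, h2⟩
          · rw [h1, h2] at hpp; exact absurd rfl hpp
        have hval : ∀ c, A r c * (if p c then (1:ℝ) else -1)
            = (if c = cT then 1 else 0) + (if c = cF then -1 else 0) := by
          intro c
          by_cases hT : c = cT
          · subst hT
            have : c ≠ cF := fun h => by rw [h, hpF] at hpT; exact Bool.noConfusion hpT
            rw [if_pos rfl, if_neg this, hpT, if_pos rfl,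
              (h01 r c).resolve_left hcT]
            norm_num
          · by_cases hF : c = cF
            · subst hF
              rw [if_neg hT, if_pos rfl, hpF]
              rw [(h01 r c).resolve_left hcF]
              norm_num
            · have hzero : A r c = 0 := by
                by_contra h
                cases hq : p c
                · exact hF (huniq r c cF (by rw [hq, hpF]) h hcF)
                · exact hT (huniq r c cT (by rw [hq, hpT]) h hcT)
              rw [hzero, if_neg hT, if_neg hF]
              norm_num
        show (A *ᵥ fun c => if p c then (1:ℝ) else -1) r = (0 : Fin (n+1) → ℝ) r
        rw [Matrix.mulVec, dotProduct]
        rw [Finset.sum_congr rfl fun c _ => hval c, Finset.sum_add_distrib]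
        have hT' : cT ≠ cF := fun h => by rw [h, hpF] at hpT; exact Bool.noConfusion hpT
        rw [Finset.sum_ite_eq' Finset.univ cT (fun _ => (1:ℝ)),
          Finset.sum_ite_eq' Finset.univ cF (fun _ => (-1:ℝ))]
        simp




lemma zo_sum_unique {κ : Type*} [Fintype κ] [DecidableEq κ] (x : κ → ℝ)
    (h01 : ∀ i, x i = 0 ∨ x i = 1) (hs : ∑ i, x i ≤ 1) {i j : κ}
    (hi : x i = 1) (hj : x j = 1) : i = j := by
  by_contra hij
  have hsub : ({i, j} : Finset κ) ⊆ Finset.univ := Finset.subset_univ _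
  have h2 : x i + x j ≤ ∑ k, x k := by
    rw [← Finset.sum_pair hij]
    exact Finset.sum_le_sum_of_subset_of_nonneg hsub fun k _ _ =>
      (h01 k).elim (fun h => h.ge) (fun h => by rw [h]; norm_num)
  rw [hi, hj] at h2
  linarith

lemma zo_sum_eq_one {κ : Type*} [Fintype κ] (x : κ → ℝ)
    (h01 : ∀ i, x i = 0 ∨ x i = 1) (hs : ∑ i, x i ≤ 1) {i : κ}
    (hi : x i = 1) : ∑ k, x k = 1 := by
  have h2 : x i ≤ ∑ k, x k := by
    refine Finset.single_le_sum (fun k _ => ?_) (Finset.mem_univ i)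
    exact (h01 k).elim (fun h => h.ge) (fun h => by rw [h]; norm_num)
  rw [hi] at h2
  linarith

-- generic TU over arbitrary fintype index
lemma tu_gen {κ : Type*} [Fintype κ] [DecidableEq κ] (A : Matrix κ κ ℝ) (p : κ → Bool)
    (h01 : ∀ r c, A r c = 0 ∨ A r c = 1)
    (huniq : ∀ r c c', p c = p c' → A r c ≠ 0 → A r c' ≠ 0 → c = c') :
    A.det = 0 ∨ A.det = 1 ∨ A.det = -1 := by
  set n := Fintype.card κ with hn
  set e : Fin n ≃ κ := (Fintype.equivFin κ).symm with he
  rw [← Matrix.det_submatrix_equiv_self e A]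
  refine tu_fin n (A.submatrix e e) (p ∘ e) (fun r c => h01 _ _) ?_
  intro r c c' hp h1 h2
  exact e.injective (huniq (e r) (e c) (e c') hp h1 h2)

lemma classMat_det_tri (a b : ℕ) (w : Option (Fin a ⊕ Fin b) → (Fin a ⊕ Fin b → ℝ))
    (hv : ∀ r, IsRedVertex a b (w r)) :
    (classMat a b w).det = 0 ∨ (classMat a b w).det = 1 ∨ (classMat a b w).det = -1 := by
  classical
  let ι := Fin a ⊕ Fin b
  set M := (classMat a b w)ᵀ with hM
  set v : Option ι → ℝ := fun r => 1 - ∑ i : Fin a, w r (Sum.inl i) with hv'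
  set c : Option ι → ℝ :=
    fun o => o.elim 1 (Sum.elim (fun _ => (-1:ℝ)) (fun _ => (0:ℝ))) with hc
  have hvrow : v = ∑ k, c k • M k := by
    funext r
    rw [Finset.sum_apply]
    rw [Fintype.sum_option]
    have : ∀ z : ι, (c (some z) • M (some z)) r
        = Sum.elim (fun _ : Fin a => (-1:ℝ)) (fun _ : Fin b => (0:ℝ)) z * w r z := by
      intro z; rfl
    rw [Finset.sum_congr rfl fun z _ => this z]
    rw [Fintype.sum_sum_type]
    simp only [Sum.elim_inl, Sum.elim_inr, zero_mul, neg_one_mul, Finset.sum_const_zero,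
      Finset.sum_neg_distrib]
    show v r = (1 : ℝ) * M none r + (-∑ i : Fin a, w r (Sum.inl i) + 0)
    have hMn : M none r = 1 := rfl
    rw [hMn, hv']
    ring
  have hdet1 : (M.updateRow none v).det = (classMat a b w).det := by
    rw [hvrow, Matrix.det_updateRow_sum]
    have hcn : c none = 1 := rfl
    rw [hcn, one_smul, hM, Matrix.det_transpose]
  set B := (M.updateRow none v)ᵀ with hB
  have hdet2 : B.det = (classMat a b w).det := by rw [Matrix.det_transpose]; exact hdet1
  rw [← hdet2]
  set p : Option ι → Bool :=
    fun o => o.elim true (Sum.elim (fun _ => true) (fun _ => false)) with hp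
  -- entries of B
  have hBnone : ∀ r, B r none = 1 - ∑ i : Fin a, w r (Sum.inl i) := by
    intro r
    show (M.updateRow none v) none r = _
    rw [Matrix.updateRow_self]
  have hBsome : ∀ r z, B r (some z) = w r z := by
    intro r z
    show (M.updateRow none v) (some z) r = _
    rw [Matrix.updateRow_ne (Option.some_ne_none z)]
    rfl
  refine tu_gen B p ?_ ?_
  · intro r o
    obtain ⟨h01, hsL, hsR⟩ := hv r
    cases o with
    | none =>
      rw [hBnone]
      rcases (Classical.em (∃ i : Fin a, w r (Sum.inl i) = 1)) with ⟨i, hi⟩ | hno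
      · left
        rw [zo_sum_eq_one (fun i => w r (Sum.inl i)) (fun i => h01 _) hsL hi]
        ring
      · right
        push_neg at hno
        have : ∀ i : Fin a, w r (Sum.inl i) = 0 :=
          fun i => (h01 (Sum.inl i)).resolve_right (hno i)
        rw [Finset.sum_eq_zero fun i _ => this i]
        ring
    | some z => rw [hBsome]; exact h01 z
  · intro r o o' hpo h1 h2
    obtain ⟨h01, hsL, hsR⟩ := hv r
    clear_value p B M v c
    match o, o' with
    | none, none => rfl
    | none, some (Sum.inl i) =>
      exfalso
      rw [hBsome] at h2
      rw [hBnone] at h1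
      have hi : w r (Sum.inl i) = 1 := (h01 _).resolve_left h2
      rw [zo_sum_eq_one (fun i => w r (Sum.inl i)) (fun i => h01 _) hsL hi] at h1
      simp at h1
    | some (Sum.inl i), none =>
      exfalso
      rw [hBsome] at h1
      rw [hBnone] at h2
      have hi : w r (Sum.inl i) = 1 := (h01 _).resolve_left h1
      rw [zo_sum_eq_one (fun i => w r (Sum.inl i)) (fun i => h01 _) hsL hi] at h2
      simp at h2
    | some (Sum.inl i), some (Sum.inl i') =>
      rw [hBsome] at h1 h2
      have := zo_sum_unique (fun i => w r (Sum.inl i)) (fun i => h01 _) hsL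
        ((h01 _).resolve_left h1) ((h01 _).resolve_left h2)
      rw [this]
    | some (Sum.inr j), some (Sum.inr j') =>
      rw [hBsome] at h1 h2
      have := zo_sum_unique (fun j => w r (Sum.inr j)) (fun j => h01 _) hsR
        ((h01 _).resolve_left h1) ((h01 _).resolve_left h2)
      rw [this]
    | none, some (Sum.inr j) => simp [hp] at hpo
    | some (Sum.inr j), none => simp [hp] at hpo
    | some (Sum.inl i), some (Sum.inr j) => simp [hp] at hpo
    | some (Sum.inr j), some (Sum.inl i) => simp [hp] at hpo

lemma det_diff_ne_zero {ι : Type*} [Fintype ι] [DecidableEq ι]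
    (w : Option ι → (ι → ℝ)) (h : AffineIndependent ℝ w) :
    (Matrix.of fun i j : ι => w (some i) j - w none j).det ≠ 0 := by
  rw [affineIndependent_iff_linearIndependent_vsub ℝ w none] at h
  set e : ι → {x : Option ι // x ≠ none} := fun i => ⟨some i, Option.some_ne_none i⟩ with he
  have hinj : Function.Injective e := by
    intro i j hij
    have : (some i : Option ι) = some j := congrArg Subtype.val hij
    exact Option.some_injective ι this
  have hli : LinearIndependent ℝ ((fun x : {x : Option ι // x ≠ none} =>
      (w x -ᵥ w none : ι → ℝ)) ∘ e) := h.comp e hinj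
  have hli2 : LinearIndependent ℝ
      (fun i : ι => (Matrix.of fun i j : ι => w (some i) j - w none j) i) := by
    have heq : (fun i : ι => (Matrix.of fun i j : ι => w (some i) j - w none j) i)
        = ((fun x : {x : Option ι // x ≠ none} => (w x -ᵥ w none : ι → ℝ)) ∘ e) := by
      funext i
      funext j
      simp [he, vsub_eq_sub]
    rw [heq]
    exact hli
  have hunit : IsUnit (Matrix.of fun i j : ι => w (some i) j - w none j) :=
    Matrix.linearIndependent_rows_iff_isUnit.mp hli2
  have h2 := (Matrix.isUnit_iff_isUnit_det _).mp hunit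
  exact h2.ne_zero

lemma classMat_eq_diff (a b : ℕ) (w : Option (Fin a ⊕ Fin b) → (Fin a ⊕ Fin b → ℝ)) :
    (classMat a b w).det
      = (Matrix.of fun i j : Fin a ⊕ Fin b => w (some i) j - w none j).det := by
  rw [detOptionBlock (classMat a b w) (fun r => rfl)]
  rfl

theorem part1 (a b : ℕ) (w : Option (Fin a ⊕ Fin b) → (Fin a ⊕ Fin b → ℝ))
    (hv : ∀ r, IsRedVertex a b (w r)) (ha : AffineIndependent ℝ w) :
    |(classMat a b w).det| = 1 := by
  have h1 := classMat_det_tri a b w hv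
  have h2 : (classMat a b w).det ≠ 0 := by
    rw [classMat_eq_diff]
    exact det_diff_ne_zero w ha
  rcases h1 with h | h | h
  · exact absurd h h2
  · rw [h]; norm_num
  · rw [h]; norm_num





/-- matrix whose columns are w(some i) - w(none) -/
def Nmat {ι : Type*} [Fintype ι] [DecidableEq ι] (w : Option ι → (ι → ℝ)) :
    Matrix ι ι ℝ :=
  Matrix.of fun j i => w (some i) j - w none j

lemma volume_corner (ι : Type*) [Fintype ι] :
    volume (corner ι) = ((Fintype.card ι).factorial : ℝ≥0∞)⁻¹ := by
  classical
  set n := Fintype.card ι with hn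
  set e : Fin n ≃ ι := (Fintype.equivFin ι).symm with he
  have hmp := volume_measurePreserving_piCongrLeft (fun _ : ι => ℝ) e
  have hco : ∀ (y : Fin n → ℝ) (i : ι),
      (MeasurableEquiv.piCongrLeft (fun _ : ι => ℝ) e) y i = y (e.symm i) := by
    intro y i
    have h := MeasurableEquiv.piCongrLeft_apply_apply (β := fun _ : ι => ℝ) e y (e.symm i)
    rwa [e.apply_symm_apply] at h
  have hpre : (MeasurableEquiv.piCongrLeft (fun _ : ι => ℝ) e) ⁻¹' corner ι
      = corner (Fin n) := by
    ext y
    simp only [mem_preimage, corner, mem_setOf_eq]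
    constructor
    · rintro ⟨h1, h2⟩
      constructor
      · intro i
        have := h1 (e i)
        rwa [hco, e.symm_apply_apply] at this
      · calc ∑ i : Fin n, y i
            = ∑ i : ι, y (e.symm i) := (Equiv.sum_comp e.symm (fun j => y j)).symm
          _ = ∑ i : ι, (MeasurableEquiv.piCongrLeft (fun _ : ι => ℝ) e) y i := by
              refine Finset.sum_congr rfl fun i _ => (hco y i).symm
          _ ≤ 1 := h2
    · rintro ⟨h1, h2⟩
      constructor
      · intro i
        rw [hco]
        exact h1 _
      · calc ∑ i : ι, (MeasurableEquiv.piCongrLeft (fun _ : ι => ℝ) e) y i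
            = ∑ i : ι, y (e.symm i) := Finset.sum_congr rfl fun i _ => hco y i
          _ = ∑ i : Fin n, y i := Equiv.sum_comp e.symm (fun j => y j)
          _ ≤ 1 := h2
  have := hmp.measure_preimage (isClosed_corner ι).measurableSet.nullMeasurableSet
  rw [hpre] at this
  rw [← this, volume_corner_fin]


lemma det_Nmat {ι : Type*} [Fintype ι] [DecidableEq ι] (w : Option ι → (ι → ℝ)) :
    (Nmat w).det = (Matrix.of fun i j : ι => w (some i) j - w none j).det := by
  rw [← Matrix.det_transpose]
  rfl

lemma hull_volume {ι : Type*} [Fintype ι] [DecidableEq ι] (w : Option ι → (ι → ℝ)) :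
    volume (convexHull ℝ (Set.range w))
      = ENNReal.ofReal |(Nmat w).det| * volume (corner ι) := by
  classical
  set L := Matrix.toLin' (Nmat w) with hL
  set g : (ι → ℝ) →ᵃ[ℝ] (ι → ℝ) := AffineMap.const ℝ (ι → ℝ) (w none) + L.toAffineMap with hg
  have hgapp : ∀ x, g x = w none + L x := fun x => rfl
  have hgv : g ∘ vtx ι = w := by
    funext o
    cases o with
    | none =>
      show g (vtx ι none) = w none
      rw [hgapp]
      show w none + L 0 = w none
      rw [map_zero, add_zero]
    | some i =>
      show g (vtx ι (some i)) = w (some i)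
      rw [hgapp]
      show w none + (Nmat w) *ᵥ (Pi.single i 1) = w (some i)
      rw [Matrix.mulVec_single]
      funext j
      show w none j + (Nmat w) j i * 1 = w (some i) j
      show w none j + (w (some i) j - w none j) * 1 = w (some i) j
      ring
  have himg : convexHull ℝ (Set.range w) = g '' corner ι := by
    rw [← hgv, Set.range_comp, ← AffineMap.image_convexHull, ← corner_eq_convexHull]
  rw [himg]
  have hcomp : g '' corner ι = (fun y => w none + y) '' (L '' corner ι) := by
    rw [← Set.image_comp]
    rfl
  rw [hcomp]
  have htrans : volume ((fun y => w none + y) '' (L '' corner ι)) = volume (L '' corner ι) := by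
    rw [Set.image_add_left, measure_preimage_add]
  rw [htrans, Measure.addHaar_image_linearMap, LinearMap.det_toLin']

lemma volume_redProd (a b : ℕ) :
    volume (redProd a b) = ((a + b).choose a : ℝ≥0∞) * (((a+b).factorial : ℝ≥0∞))⁻¹ := by
  classical
  have hmp := MeasureTheory.volume_measurePreserving_sumPiEquivProdPi
    (fun _ : Fin a ⊕ Fin b => ℝ)
  have hpre : (MeasurableEquiv.sumPiEquivProdPi (fun _ : Fin a ⊕ Fin b => ℝ)) ⁻¹'
      ((corner (Fin a)) ×ˢ (corner (Fin b))) = redProd a b := by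
    ext x
    simp only [Set.mem_preimage, Set.mem_prod, MeasurableEquiv.coe_sumPiEquivProdPi,
      Equiv.sumPiEquivProdPi, Equiv.coe_fn_mk, corner, redProd, Set.mem_setOf_eq]
    constructor
    · rintro ⟨⟨ha1, ha2⟩, ⟨hb1, hb2⟩⟩
      refine ⟨fun z => ?_, ha2, hb2⟩
      cases z with
      | inl i => exact ha1 i
      | inr j => exact hb1 j
    · rintro ⟨h1, h2, h3⟩
      exact ⟨⟨fun i => h1 _, h2⟩, ⟨fun j => h1 _, h3⟩⟩
  have hmeas : MeasurableSet ((corner (Fin a)) ×ˢ (corner (Fin b))) :=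
    ((isClosed_corner (Fin a)).measurableSet).prod ((isClosed_corner (Fin b)).measurableSet)
  have := hmp.measure_preimage hmeas.nullMeasurableSet
  rw [hpre] at this
  rw [this]
  rw [MeasureTheory.Measure.volume_eq_prod, MeasureTheory.Measure.prod_prod]
  rw [volume_corner, volume_corner, Fintype.card_fin, Fintype.card_fin]
  -- arithmetic
  have hfact : ((a+b).factorial : ℝ≥0∞) = ((a+b).choose a : ℝ≥0∞) *
      (a.factorial : ℝ≥0∞) * (b.factorial : ℝ≥0∞) := by
    have h := Nat.choose_mul_factorial_mul_factorial (Nat.le_add_right a b)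
    rw [Nat.add_sub_cancel_left] at h
    exact_mod_cast h.symm
  have hC0 : ((a+b).choose a : ℝ≥0∞) ≠ 0 := by
    exact_mod_cast (Nat.choose_pos (Nat.le_add_right a b)).ne'
  have hCt : ((a+b).choose a : ℝ≥0∞) ≠ ⊤ := ENNReal.natCast_ne_top _
  have ha0 : (a.factorial : ℝ≥0∞) ≠ 0 := by exact_mod_cast a.factorial_ne_zero
  have hat : (a.factorial : ℝ≥0∞) ≠ ⊤ := ENNReal.natCast_ne_top _
  have hb0 : (b.factorial : ℝ≥0∞) ≠ 0 := by exact_mod_cast b.factorial_ne_zero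
  have hbt : (b.factorial : ℝ≥0∞) ≠ ⊤ := ENNReal.natCast_ne_top _
  rw [hfact]
  rw [ENNReal.mul_inv (Or.inl (mul_ne_zero hC0 ha0)) (Or.inl (ENNReal.mul_ne_top hCt hat))]
  rw [ENNReal.mul_inv (Or.inl hC0) (Or.inl hCt)]
  rw [← mul_assoc, ← mul_assoc, ENNReal.mul_inv_cancel hC0 hCt, one_mul]





lemma hull_volume_eq (a b : ℕ) (w : Option (Fin a ⊕ Fin b) → (Fin a ⊕ Fin b → ℝ))
    (hv : ∀ r, IsRedVertex a b (w r)) (ha : AffineIndependent ℝ w) :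
    volume (convexHull ℝ (Set.range w)) = (((a+b).factorial : ℝ≥0∞))⁻¹ := by
  rw [hull_volume w]
  have habs : |(Nmat w).det| = 1 := by
    rw [det_Nmat, ← classMat_eq_diff]
    exact part1 a b w hv ha
  rw [habs, ENNReal.ofReal_one, one_mul, volume_corner]
  congr 2
  simp


theorem part2 (a b : ℕ) (m : ℕ) (f : Fin m → Option (Fin a ⊕ Fin b) → (Fin a ⊕ Fin b → ℝ))
    (hv : ∀ i r, IsRedVertex a b (f i r)) (ha : ∀ i, AffineIndependent ℝ (f i))
    (hcover : (⋃ i, convexHull ℝ (Set.range (f i))) = redProd a b) :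
    (a + b).choose a ≤ m := by
  have hk0 : (((a+b).factorial : ℝ≥0∞))⁻¹ ≠ 0 := by
    simp [ENNReal.inv_ne_zero]
  have hkt : (((a+b).factorial : ℝ≥0∞))⁻¹ ≠ ⊤ := by
    rw [Ne, ENNReal.inv_eq_top]
    exact_mod_cast (a+b).factorial_ne_zero
  have hle : volume (redProd a b) ≤ ∑ i : Fin m, volume (convexHull ℝ (Set.range (f i))) := by
    rw [← hcover]
    exact measure_iUnion_fintype_le _ _
  rw [volume_redProd] at hle
  rw [Finset.sum_congr rfl (fun i _ => hull_volume_eq a b (f i) (hv i) (ha i))] at hle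
  rw [Finset.sum_const, Finset.card_univ, Fintype.card_fin, nsmul_eq_mul] at hle
  have := (ENNReal.mul_le_mul_iff_left hk0 hkt).mp hle
  exact_mod_cast this

theorem part3 (a b : ℕ) (m : ℕ) (f : Fin m → Option (Fin a ⊕ Fin b) → (Fin a ⊕ Fin b → ℝ))
    (hv : ∀ i r, IsRedVertex a b (f i r)) (ha : ∀ i, AffineIndependent ℝ (f i))
    (hcover : (⋃ i, convexHull ℝ (Set.range (f i))) = redProd a b)
    (hdisj : Pairwise fun i j =>
      interior (convexHull ℝ (Set.range (f i))) ∩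
        interior (convexHull ℝ (Set.range (f j))) = ∅) :
    m = (a + b).choose a := by
  have hk0 : (((a+b).factorial : ℝ≥0∞))⁻¹ ≠ 0 := by
    simp [ENNReal.inv_ne_zero]
  have hkt : (((a+b).factorial : ℝ≥0∞))⁻¹ ≠ ⊤ := by
    rw [Ne, ENNReal.inv_eq_top]
    exact_mod_cast (a+b).factorial_ne_zero
  refine le_antisymm ?_ (part2 a b m f hv ha hcover)
  have hint : ∀ i, volume (interior (convexHull ℝ (Set.range (f i))))
      = (((a+b).factorial : ℝ≥0∞))⁻¹ := by
    intro i
    rw [← hull_volume_eq a b (f i) (hv i) (ha i)]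
    refine le_antisymm (measure_mono interior_subset) ?_
    have hfr : volume (frontier (convexHull ℝ (Set.range (f i)))) = 0 :=
      Convex.addHaar_frontier volume (convex_convexHull ℝ _)
    calc volume (convexHull ℝ (Set.range (f i)))
        ≤ volume (interior (convexHull ℝ (Set.range (f i)))
            ∪ frontier (convexHull ℝ (Set.range (f i)))) := by
          refine measure_mono fun x hx => ?_
          by_cases hx2 : x ∈ interior (convexHull ℝ (Set.range (f i)))
          · exact Or.inl hx2
          · exact Or.inr ⟨subset_closure hx, hx2⟩
      _ ≤ volume (interior (convexHull ℝ (Set.range (f i))))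
            + volume (frontier (convexHull ℝ (Set.range (f i)))) := measure_union_le _ _
      _ = volume (interior (convexHull ℝ (Set.range (f i)))) := by rw [hfr, add_zero]
  have hdisj' : Pairwise (Function.onFun Disjoint
      fun i => interior (convexHull ℝ (Set.range (f i)))) := by
    intro i j hij
    exact Set.disjoint_iff_inter_eq_empty.mpr (hdisj hij)
  have hsum : volume (⋃ i, interior (convexHull ℝ (Set.range (f i))))
      = ∑' i : Fin m, volume (interior (convexHull ℝ (Set.range (f i)))) :=
    measure_iUnion hdisj' fun i => isOpen_interior.measurableSet
  have hsub : (⋃ i, interior (convexHull ℝ (Set.range (f i)))) ⊆ redProd a b := by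
    rw [← hcover]
    exact Set.iUnion_mono fun i => interior_subset
  have hle : (m : ℝ≥0∞) * (((a+b).factorial : ℝ≥0∞))⁻¹ ≤
      ((a + b).choose a : ℝ≥0∞) * (((a+b).factorial : ℝ≥0∞))⁻¹ := by
    rw [← volume_redProd]
    calc (m : ℝ≥0∞) * (((a+b).factorial : ℝ≥0∞))⁻¹
        = ∑' i : Fin m, volume (interior (convexHull ℝ (Set.range (f i)))) := by
          rw [tsum_fintype, Finset.sum_congr rfl fun i _ => hint i,
            Finset.sum_const, Finset.card_univ, Fintype.card_fin, nsmul_eq_mul]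
      _ = volume (⋃ i, interior (convexHull ℝ (Set.range (f i)))) := hsum.symm
      _ ≤ volume (redProd a b) := measure_mono hsub
  have := (ENNReal.mul_le_mul_iff_left hk0 hkt).mp hle
  exact_mod_cast this


end
end Stmt15Aux

/-- Every maximal nondegenerate simplex with vertices among the vertices of `Δ^a × Δ^b`
has class exactly 1; consequently every simplicial cover of `Δ^a × Δ^b` using vertices of
the polytope has at least `C(a+b, a)` simplices, and every vertex triangulation (a cover
whose simplices have pairwise disjoint interiors) has exactly `C(a+b, a)` simplices. -/
theorem stmt15 (a b : ℕ) :
    (∀ w : Option (Fin a ⊕ Fin b) → (Fin a ⊕ Fin b → ℝ),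
      (∀ r, IsRedVertex a b (w r)) → AffineIndependent ℝ w →
        |(classMat a b w).det| = 1) ∧
    (∀ (m : ℕ) (f : Fin m → Option (Fin a ⊕ Fin b) → (Fin a ⊕ Fin b → ℝ)),
      (∀ i r, IsRedVertex a b (f i r)) → (∀ i, AffineIndependent ℝ (f i)) →
      (⋃ i, convexHull ℝ (Set.range (f i))) = redProd a b →
        (a + b).choose a ≤ m) ∧
    (∀ (m : ℕ) (f : Fin m → Option (Fin a ⊕ Fin b) → (Fin a ⊕ Fin b → ℝ)),
      (∀ i r, IsRedVertex a b (f i r)) → (∀ i, AffineIndependent ℝ (f i)) →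
      (⋃ i, convexHull ℝ (Set.range (f i))) = redProd a b →
      (Pairwise fun i j =>
        interior (convexHull ℝ (Set.range (f i))) ∩
          interior (convexHull ℝ (Set.range (f j))) = ∅) →
        m = (a + b).choose a) := by
  refine ⟨fun w hv ha => Stmt15Aux.part1 a b w hv ha,
    fun m f hv ha hc => Stmt15Aux.part2 a b m f hv ha hc,
    fun m f hv ha hc hd => Stmt15Aux.part3 a b m f hv ha hc hd⟩
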